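/- arXiv:0811.0149 — 5 statements merged into one kernel-verified Lean document; each statement's English description precedes it below -/
import Mathlib

section
/- Let P_1, ..., P_N be nonzero complex polynomials with strictly decreasing degrees, deg P_1 > deg P_2 > ... > deg P_N. If γ_1, ..., γ_N are continuous h-periodic functions ℝ → ℂ (h > 0) such that ∑_{j=1}^N γ_j(x) P_j(x) = 0 for all x ∈ ℝ, then γ_j = 0 identically for every j. -/
lemma indep_aux (N : ℕ) (P : Fin N → Polynomial ℂ)
    (hP : ∀ j, P j ≠ 0)
    (hdeg : ∀ j k : Fin N, j < k → (P k).degree < (P j).degree)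
    (c : Fin N → ℂ) (hc : ∑ j, c j • P j = 0) : ∀ j, c j = 0 := by
  by_contra hcon
  push_neg at hcon
  obtain ⟨j, hj⟩ := hcon
  -- take minimal such j
  classical
  have hne : {j : Fin N | c j ≠ 0}.Nonempty := ⟨j, hj⟩
  obtain ⟨j0, hj0, hmin⟩ := Set.exists_min_image _ id (Set.toFinite _) hne
  have hcoeff := congrArg (fun q => Polynomial.coeff q (P j0).natDegree) hc
  simp only [Polynomial.finset_sum_coeff, Polynomial.coeff_smul, Polynomial.coeff_zero,
    smul_eq_mul] at hcoeff
  have hzero : ∀ k : Fin N, k ≠ j0 → c k * (P k).coeff (P j0).natDegree = 0 := by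
    intro k hk
    rcases lt_or_gt_of_ne hk with hlt | hgt
    · have : c k = 0 := by
        by_contra hck
        exact absurd (hmin k hck) (not_le.mpr hlt)
      simp [this]
    · have hdk : (P k).degree < (P j0).degree := hdeg j0 k hgt
      rw [Polynomial.coeff_eq_zero_of_degree_lt, mul_zero]
      calc (P k).degree < (P j0).degree := hdk
        _ ≤ (P j0).natDegree := Polynomial.degree_le_natDegree
  rw [Finset.sum_eq_single j0 (fun k _ hk => hzero k hk) (by simp)] at hcoeff
  have := mul_eq_zero.mp hcoeff
  rcases this with h1 | h2
  · exact hj0 h1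
  · exact (hP j0) (Polynomial.leadingCoeff_eq_zero.mp h2)

theorem stmt_0 (N : ℕ) (hN : 1 ≤ N) (P : Fin N → Polynomial ℂ)
    (hP : ∀ j, P j ≠ 0)
    (hdeg : ∀ j k : Fin N, j < k → (P k).degree < (P j).degree)
    (h : ℝ) (hh : 0 < h)
    (γ : Fin N → ℝ → ℂ)
    (hcont : ∀ j, Continuous (γ j))
    (hper : ∀ j, Function.Periodic (γ j) h)
    (hsum : ∀ x : ℝ, ∑ j, γ j x * (P j).eval (x : ℂ) = 0) :
    ∀ j x, γ j x = 0 := by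
  intro j x
  set Q : Polynomial ℂ := ∑ k, γ k x • P k with hQ
  have hQroot : ∀ n : ℕ, Q.IsRoot ((x + n * h : ℝ) : ℂ) := by
    intro n
    have hval : ∀ k, γ k (x + n * h) = γ k x := fun k => by
      simpa [add_comm] using ((hper k).nat_mul n) x
    have := hsum (x + n * h)
    simp only [Polynomial.IsRoot, hQ, Polynomial.eval_finset_sum, Polynomial.eval_smul,
      smul_eq_mul]
    rw [← this]
    refine Finset.sum_congr rfl fun k _ => by rw [hval k]
  have hQ0 : Q = 0 := by
    apply Polynomial.eq_zero_of_infinite_isRoot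
    apply Set.Infinite.mono (s := (fun n : ℕ => ((x + n * h : ℝ) : ℂ)) '' Set.univ)
    · rintro _ ⟨n, -, rfl⟩; exact hQroot n
    · apply Set.Infinite.image
      · intro a _ b _ hab
        simp only at hab
        have h1 : (x + a * h : ℝ) = x + b * h := by exact_mod_cast hab
        have h2 : (a : ℝ) = b := by
          have := mul_right_cancel₀ hh.ne' (by linarith : (a : ℝ) * h = b * h)
          exact this
        exact_mod_cast h2
      · exact Set.infinite_univ
  exact indep_aux N P hP hdeg _ hQ0 j
end

section
/- With M_n(x) as above (the n × (n+1) matrix with (j,r) entry (i(x+jh))^r, j = 1..n, r = 0..n), let M_{n,r}(x) denote the n × n submatrix obtained by deleting column r. Then for each r = 0, 1, ..., n−1, the derivative in x of det M_{n,r}(x) satisfies (det M_{n,r})'(x) = i (r+1) det M_{n,r+1}(x). -/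
/-- `detM n h r x` is the determinant of the `n × n` submatrix of the `n × (n+1)`
matrix `M_n(x)` (with `(j,s)` entry `(i(x+jh))^s`, `j = 1..n`, `s = 0..n`)
obtained by deleting column `r`. -/
noncomputable def detM (n : ℕ) (h : ℝ) (r : Fin (n + 1)) (x : ℝ) : ℂ :=
  (Matrix.of fun j k : Fin n =>
    (Complex.I * ((x : ℂ) + ((j : ℕ) + 1) * (h : ℂ))) ^ ((r.succAbove k : Fin (n + 1)) : ℕ)).det

theorem aux_hasDerivAt_det {m : ℕ} (A : ℝ → Matrix (Fin m) (Fin m) ℂ)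
    (A' : Matrix (Fin m) (Fin m) ℂ) (x : ℝ)
    (hA : ∀ i j, HasDerivAt (fun y => A y i j) (A' i j) x) :
    HasDerivAt (fun y => (A y).det)
      (∑ k, ((A x).updateCol k (fun i => A' i k)).det) x := by
  have key : ∀ σ : Equiv.Perm (Fin m),
      HasDerivAt (fun y => ∏ i, A y (σ i) i)
        (∑ k, (∏ i ∈ Finset.univ.erase k, A x (σ i) i) * A' (σ k) k) x := by
    intro σ
    simpa [smul_eq_mul] using HasDerivAt.fun_finsetProd (u := (Finset.univ : Finset (Fin m)))
      (f := fun i y => A y (σ i) i) (f' := fun i => A' (σ i) i)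
      (fun i _ => hA (σ i) i)
  have main : HasDerivAt (fun y => (A y).det)
      (∑ σ : Equiv.Perm (Fin m), (((Equiv.Perm.sign σ : ℤ)) : ℂ) *
        ∑ k, (∏ i ∈ Finset.univ.erase k, A x (σ i) i) * A' (σ k) k) x := by
    have hfun : (fun y => (A y).det)
        = fun y => ∑ σ : Equiv.Perm (Fin m),
            (((Equiv.Perm.sign σ : ℤ)) : ℂ) * ∏ i, A y (σ i) i := by
      funext y
      rw [Matrix.det_apply]
      refine Finset.sum_congr rfl fun σ _ => ?_
      rw [Units.smul_def, zsmul_eq_mul]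
    rw [hfun]
    exact HasDerivAt.fun_sum fun σ _ => (key σ).const_mul _
  convert main using 1
  have step : ∀ k : Fin m, ((A x).updateCol k (fun i => A' i k)).det
      = ∑ σ : Equiv.Perm (Fin m), (((Equiv.Perm.sign σ : ℤ)) : ℂ) *
          ((∏ i ∈ Finset.univ.erase k, A x (σ i) i) * A' (σ k) k) := by
    intro k
    rw [Matrix.det_apply]
    refine Finset.sum_congr rfl fun σ _ => ?_
    rw [Units.smul_def, zsmul_eq_mul,
      ← Finset.mul_prod_erase Finset.univ _ (Finset.mem_univ k)]
    have hprod : ∏ i ∈ Finset.univ.erase k, (A x).updateCol k (fun i => A' i k) (σ i) i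
        = ∏ i ∈ Finset.univ.erase k, A x (σ i) i := by
      refine Finset.prod_congr rfl fun i hi => ?_
      rw [Matrix.updateCol_apply, if_neg (Finset.ne_of_mem_erase hi)]
    rw [hprod, Matrix.updateCol_apply, if_pos rfl]
    ring
  simp only [step]
  rw [Finset.sum_comm]
  refine Finset.sum_congr rfl fun σ _ => ?_
  rw [Finset.mul_sum]

theorem stmt_3 (n : ℕ) (h : ℝ) (hh : 0 < h) (r : Fin n) (x : ℝ) :
    HasDerivAt (detM n h r.castSucc)
      (Complex.I * (((r : ℕ) : ℂ) + 1) * detM n h r.succ x) x := by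
  classical
  set E : Fin n → ℝ → ℂ := fun j y => Complex.I * ((y : ℂ) + ((j : ℕ) + 1) * (h : ℂ)) with hE_def
  set e : Fin n → ℕ := fun k => ((r.castSucc.succAbove k : Fin (n + 1)) : ℕ) with he_def
  set A : ℝ → Matrix (Fin n) (Fin n) ℂ :=
    fun y => Matrix.of fun j k => E j y ^ e k with hA_def
  set A' : Matrix (Fin n) (Fin n) ℂ :=
    Matrix.of fun j k => ((e k : ℂ) * E j x ^ (e k - 1)) * Complex.I with hA'_def
  have hE : ∀ j, HasDerivAt (fun y => E j y) Complex.I x := by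
    intro j
    have h1 : HasDerivAt (fun y : ℝ => ((y : ℂ))) 1 x := by
      simpa using (hasDerivAt_id x).ofReal_comp
    have h2 := (h1.add_const (((j : ℕ) + 1) * (h : ℂ))).const_mul Complex.I
    simpa [hE_def] using h2
  have hA : ∀ j k, HasDerivAt (fun y => A y j k) (A' j k) x := by
    intro j k
    have hc := HasDerivAt.comp (𝕜 := ℝ) x (hasDerivAt_pow (e k) (E j x)) (hE j)
    simpa [Function.comp_def, hA_def, hA'_def] using hc
  have hD := aux_hasDerivAt_det A A' x hA
  have hfun : detM n h r.castSucc = fun y => (A y).det := rfl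
  rw [hfun]
  convert hD using 1
  -- exponent computations
  have he : ∀ k : Fin n, e k = if (k : ℕ) < (r : ℕ) then (k : ℕ) else (k : ℕ) + 1 := by
    intro k
    rw [he_def]
    simp only [Fin.succAbove]
    by_cases hlt : (k : ℕ) < (r : ℕ)
    · have hc : k.castSucc < r.castSucc := by rw [Fin.lt_def]; simpa using hlt
      rw [if_pos hc, if_pos hlt, Fin.coe_castSucc]
    · have hc : ¬ k.castSucc < r.castSucc := by rw [Fin.lt_def]; simpa using hlt
      rw [if_neg hc, if_neg hlt, Fin.val_succ]
  have he' : ∀ k : Fin n, ((r.succ.succAbove k : Fin (n + 1)) : ℕ)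
      = if (k : ℕ) < (r : ℕ) + 1 then (k : ℕ) else (k : ℕ) + 1 := by
    intro k
    simp only [Fin.succAbove]
    by_cases hlt : (k : ℕ) < (r : ℕ) + 1
    · have hc : k.castSucc < r.succ := by rw [Fin.lt_def]; simpa using hlt
      rw [if_pos hc, if_pos hlt, Fin.coe_castSucc]
    · have hc : ¬ k.castSucc < r.succ := by rw [Fin.lt_def]; simpa using hlt
      rw [if_neg hc, if_neg hlt, Fin.val_succ]
  have hsmul : ∀ k, ((A x).updateCol k (fun i => A' i k)).det
      = ((e k : ℂ) * Complex.I) * ((A x).updateCol k (fun i => E i x ^ (e k - 1))).det := by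
    intro k
    have hcol : (fun i => A' i k)
        = ((e k : ℂ) * Complex.I) • (fun i => E i x ^ (e k - 1)) := by
      funext i
      simp only [hA'_def, Matrix.of_apply, Pi.smul_apply, smul_eq_mul]
      ring
    rw [hcol, Matrix.det_updateCol_smul]
  symm
  rw [Finset.sum_eq_single r]
  · rw [hsmul]
    have her : e r = (r : ℕ) + 1 := by rw [he]; simp
    have hdet : ((A x).updateCol r (fun i => E i x ^ (e r - 1))).det
        = detM n h r.succ x := by
      unfold detM
      congr 1
      ext i k
      rw [Matrix.updateCol_apply]
      by_cases hk : k = r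
      · subst hk
        simp only [if_pos rfl, her, hE_def, Matrix.of_apply, he']
        norm_num
      · rw [if_neg hk]
        simp only [hA_def, hE_def, Matrix.of_apply]
        congr 1
        rw [he, he']
        have : (k : ℕ) ≠ (r : ℕ) := fun hc => hk (Fin.ext hc)
        split_ifs <;> omega
    rw [hdet, her]
    push_cast
    ring
  · intro k _ hk
    rw [hsmul]
    by_cases h0 : e k = 0
    · simp [h0]
    · have hk1 : 1 ≤ (k : ℕ) := by
        have := he k
        have hne : (k : ℕ) ≠ (r : ℕ) := fun hc => hk (Fin.ext hc)
        by_contra hc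
        push_neg at hc
        interval_cases hkk : (k : ℕ) <;> simp_all <;> omega
      have hjlt : (k : ℕ) - 1 < n := by omega
      set j : Fin n := ⟨(k : ℕ) - 1, hjlt⟩ with hj_def
      have hjk : j ≠ k := by
        simp only [hj_def, Fin.ne_iff_vne, Fin.val_mk]
        omega
      have hne : (k : ℕ) ≠ (r : ℕ) := fun hc => hk (Fin.ext hc)
      have hej : e j = e k - 1 := by
        rw [he, he]
        have h0' : e k ≠ 0 := h0
        rw [he] at h0'
        simp only [hj_def, Fin.val_mk]
        split_ifs <;> omega
      have : ((A x).updateCol k (fun i => E i x ^ (e k - 1))).det = 0 := by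
        apply Matrix.det_zero_of_column_eq hjk
        intro i
        rw [Matrix.updateCol_apply, Matrix.updateCol_apply,
          if_neg hjk, if_pos rfl]
        simp only [hA_def, Matrix.of_apply, hej]
      rw [this, mul_zero]
  · simp
end

section
/- With M_n(x) as above, the function x ↦ det M_{n,r}(x) is a polynomial in x of degree exactly n − r, for every r = 0, 1, ..., n. -/
open Polynomial Finset

namespace Aux4

variable (n : ℕ) (h : ℝ)

noncomputable def zp (j : Fin n) : ℂ[X] :=
  C Complex.I * (X + C ((((j : ℕ) : ℂ) + 1) * (h : ℂ)))

noncomputable def Pdet (r : Fin (n + 1)) : ℂ[X] :=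
  (Matrix.of fun a b : Fin n =>
    zp n h a ^ ((r.succAbove b : Fin (n + 1)) : ℕ)).det

lemma zp_degree (j : Fin n) : (zp n h j).degree = 1 := by
  rw [zp, degree_mul, degree_C Complex.I_ne_zero, degree_X_add_C, zero_add]

lemma zp_ne_zero (j : Fin n) : zp n h j ≠ 0 := by
  intro hz
  simpa [hz] using zp_degree n h j

lemma zp_natDegree (j : Fin n) : (zp n h j).natDegree = 1 :=
  natDegree_eq_of_degree_eq_some (zp_degree n h j)

lemma zp_leadingCoeff (j : Fin n) : (zp n h j).leadingCoeff = Complex.I := by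
  rw [zp, leadingCoeff_mul, leadingCoeff_C, (monic_X_add_C _).leadingCoeff, mul_one]


lemma esymm_degree (m : ℕ) (hm : m ≤ n) :
    ((Finset.univ.val.map (zp n h)).esymm m).degree = (m : WithBot ℕ) := by
  rw [Finset.esymm_map_val]
  have hterm : ∀ t ∈ Finset.univ.powersetCard m,
      (∏ j ∈ t, zp n h j).natDegree = m := by
    intro t ht
    rw [Polynomial.natDegree_prod _ _ (fun j _ => zp_ne_zero n h j)]
    simp only [zp_natDegree]
    simpa using (Finset.mem_powersetCard.mp ht).2
  have hlc : ∀ t ∈ Finset.univ.powersetCard m,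
      (∏ j ∈ t, zp n h j).coeff m = Complex.I ^ m := by
    intro t ht
    have := hterm t ht
    rw [← this, coeff_natDegree, Polynomial.leadingCoeff_prod]
    simp only [zp_leadingCoeff]
    rw [Finset.prod_const, (Finset.mem_powersetCard.mp ht).2, this]
  apply degree_eq_of_le_of_coeff_ne_zero
  · refine (degree_sum_le _ _).trans ?_
    apply Finset.sup_le
    intro t ht
    exact (degree_le_natDegree).trans (by rw [hterm t ht])
  · rw [finset_sum_coeff, Finset.sum_congr rfl hlc, Finset.sum_const,
      Finset.card_powersetCard, Finset.card_univ, Fintype.card_fin, nsmul_eq_mul]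
    exact mul_ne_zero (by exact_mod_cast (Nat.choose_pos hm).ne')
      (pow_ne_zero _ Complex.I_ne_zero)


lemma prod_Ioi_castSucc {R : Type*} [CommRing R] (a : Fin n) (g : Fin (n + 1) → R) :
    ∏ j ∈ Finset.Ioi a.castSucc, g j =
      g (Fin.last n) * ∏ b ∈ Finset.Ioi a, g b.castSucc := by
  have hins : Finset.Ioi a.castSucc =
      insert (Fin.last n) ((Finset.Ioi a).map Fin.castSuccEmb) := by
    ext j
    simp only [Finset.mem_Ioi, Finset.mem_insert, Finset.mem_map]
    constructor
    · intro hj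
      induction j using Fin.lastCases with
      | last => exact Or.inl rfl
      | cast b =>
        exact Or.inr ⟨b, by simpa [Fin.castSucc_lt_castSucc_iff] using hj, rfl⟩
    · rintro (rfl | ⟨b, hb, rfl⟩)
      · exact Fin.castSucc_lt_last a
      · simpa [Fin.castSucc_lt_castSucc_iff] using hb
  have hnot : Fin.last n ∉ (Finset.Ioi a).map Fin.castSuccEmb := by
    simp only [Finset.mem_map]
    rintro ⟨b, -, hb⟩
    exact absurd hb (Fin.castSucc_lt_last b).ne
  rw [hins, Finset.prod_insert hnot, Finset.prod_map]
  rfl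


noncomputable def wv : Fin (n + 1) → Polynomial ℂ[X] :=
  Fin.snoc (fun a : Fin n => C (zp n h a)) X

noncomputable def c0 : ℂ[X] :=
  ∏ a : Fin n, ∏ b ∈ Finset.Ioi a, (zp n h b - zp n h a)

lemma lemB :
    (Matrix.vandermonde (wv n h)).det =
      C (c0 n h) * ∏ a : Fin n, (X - C (zp n h a)) := by
  rw [Matrix.det_vandermonde, Fin.prod_univ_castSucc]
  have hlast : ∏ j ∈ Finset.Ioi (Fin.last n), (wv n h j - wv n h (Fin.last n)) = 1 := by
    apply Finset.prod_eq_one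
    intro j hj
    exact absurd (Finset.mem_Ioi.mp hj) (Fin.le_last j).not_gt
  rw [hlast, mul_one]
  have : ∀ a : Fin n, ∏ j ∈ Finset.Ioi a.castSucc, (wv n h j - wv n h a.castSucc) =
      (X - C (zp n h a)) * ∏ b ∈ Finset.Ioi a, C (zp n h b - zp n h a) := by
    intro a
    rw [prod_Ioi_castSucc]
    congr 1
    · simp [wv, Fin.snoc_last, Fin.snoc_castSucc]
    · apply Finset.prod_congr rfl
      intro b _
      simp [wv, Fin.snoc_castSucc, map_sub]
  simp_rw [this]
  rw [Finset.prod_mul_distrib, c0, map_prod, mul_comm]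
  congr 1
  exact Finset.prod_congr rfl fun a _ => (map_prod (C : ℂ[X] →+* ℂ[X][X]) _ _).symm

lemma lemA :
    (Matrix.vandermonde (wv n h)).det =
      ∑ j : Fin (n + 1), (-1 : Polynomial ℂ[X]) ^ (n + (j : ℕ)) *
        X ^ (j : ℕ) * C (Pdet n h j) := by
  rw [Matrix.det_succ_row _ (Fin.last n)]
  apply Finset.sum_congr rfl
  intro j _
  have hl : ((Fin.last n : Fin (n + 1)) : ℕ) = n := rfl
  rw [hl]
  refine congrArg₂ (· * ·) ?_ ?_
  · refine congrArg₂ (· * ·) rfl ?_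
    simp [Matrix.vandermonde_apply, wv, Fin.snoc_last]
  · rw [Pdet, RingHom.map_det]
    congr 1
    ext a b
    simp [Matrix.vandermonde_apply, wv, Fin.succAbove_last, Fin.snoc_castSucc,
      RingHom.mapMatrix_apply, Matrix.map_apply, map_pow]

lemma Pdet_eq (r : Fin (n + 1)) :
    Pdet n h r = (-1 : ℂ[X]) ^ (n + (r : ℕ)) * ((-1 : ℂ[X]) ^ (n - (r : ℕ)) *
      (c0 n h * (Finset.univ.val.map (zp n h)).esymm (n - (r : ℕ)))) := by
  have hcard : Multiset.card (Finset.univ.val.map (zp n h)) = n := by simp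
  have hr : (r : ℕ) ≤ Multiset.card (Finset.univ.val.map (zp n h)) := by
    rw [hcard]; exact Fin.is_le r
  have key := congrArg (fun p => Polynomial.coeff p (r : ℕ)) ((lemA n h).symm.trans (lemB n h))
  -- LHS of key
  have hL : (∑ j : Fin (n + 1), (-1 : Polynomial ℂ[X]) ^ (n + (j : ℕ)) *
        X ^ (j : ℕ) * C (Pdet n h j)).coeff (r : ℕ) =
      (-1 : ℂ[X]) ^ (n + (r : ℕ)) * Pdet n h r := by
    rw [finset_sum_coeff]
    rw [Finset.sum_eq_single r]
    · have : ((-1 : Polynomial ℂ[X]) ^ (n + (r : ℕ)) * X ^ (r : ℕ) * C (Pdet n h r)) =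
          C ((-1 : ℂ[X]) ^ (n + (r : ℕ)) * Pdet n h r) * X ^ (r : ℕ) := by
        rw [map_mul, map_pow, map_neg, map_one]; ring
      rw [this, coeff_C_mul, coeff_X_pow, if_pos rfl, mul_one]
    · intro j _ hj
      have : ((-1 : Polynomial ℂ[X]) ^ (n + (j : ℕ)) * X ^ (j : ℕ) * C (Pdet n h j)) =
          C ((-1 : ℂ[X]) ^ (n + (j : ℕ)) * Pdet n h j) * X ^ (j : ℕ) := by
        rw [map_mul, map_pow, map_neg, map_one]; ring
      rw [this, coeff_C_mul, coeff_X_pow, if_neg (fun hc => hj (Fin.ext (by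
        simpa using hc.symm))), mul_zero]
    · intro hr'; exact absurd (Finset.mem_univ r) hr'
  -- RHS of key
  have hprod : (∏ a : Fin n, (X - C (zp n h a))) =
      ((Finset.univ.val.map (zp n h)).map fun t => X - C t).prod := by
    rw [Multiset.map_map]
    rfl
  have hR : (C (c0 n h) * ∏ a : Fin n, (X - C (zp n h a))).coeff (r : ℕ) =
      c0 n h * ((-1 : ℂ[X]) ^ (n - (r : ℕ)) *
        (Finset.univ.val.map (zp n h)).esymm (n - (r : ℕ))) := by
    rw [coeff_C_mul, hprod, Multiset.prod_X_sub_C_coeff _ hr, hcard]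
  rw [hL, hR] at key
  have hsq : ((-1 : ℂ[X]) ^ (n + (r : ℕ))) * ((-1 : ℂ[X]) ^ (n + (r : ℕ))) = 1 := by
    rw [← pow_add]
    exact Even.neg_one_pow ⟨n + (r : ℕ), by ring⟩
  calc Pdet n h r = ((-1 : ℂ[X]) ^ (n + (r : ℕ)) * (-1 : ℂ[X]) ^ (n + (r : ℕ))) *
        Pdet n h r := by rw [hsq, one_mul]
    _ = (-1 : ℂ[X]) ^ (n + (r : ℕ)) * ((-1 : ℂ[X]) ^ (n + (r : ℕ)) * Pdet n h r) := by ring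
    _ = _ := by rw [key]; ring

lemma c0_eq : c0 n h = C (∏ a : Fin n, ∏ b ∈ Finset.Ioi a,
    (Complex.I * (((((b : ℕ) : ℂ) + 1) * (h : ℂ)) - ((((a : ℕ) : ℂ) + 1) * (h : ℂ))))) := by
  rw [c0, map_prod]
  apply Finset.prod_congr rfl
  intro a _
  rw [map_prod]
  apply Finset.prod_congr rfl
  intro b _
  calc zp n h b - zp n h a
      = C Complex.I * (C ((((b : ℕ) : ℂ) + 1) * (h : ℂ)) -
        C ((((a : ℕ) : ℂ) + 1) * (h : ℂ))) := by rw [zp, zp]; ring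
    _ = _ := by rw [← map_sub, ← map_mul]

lemma c0_degree (hh : 0 < h) : (c0 n h).degree = 0 := by
  rw [c0_eq]
  apply degree_C
  apply Finset.prod_ne_zero_iff.mpr
  intro a _
  apply Finset.prod_ne_zero_iff.mpr
  intro b hb
  apply mul_ne_zero Complex.I_ne_zero
  rw [sub_ne_zero]
  intro hc
  have hhc : ((h : ℂ)) ≠ 0 := by simpa using hh.ne'
  have h1 : (((b : ℕ) : ℂ) + 1) = (((a : ℕ) : ℂ) + 1) := mul_right_cancel₀ hhc hc
  have h2 : ((b : ℕ) : ℂ) = ((a : ℕ) : ℂ) := by linear_combination h1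
  have : b = a := Fin.ext (by exact_mod_cast h2)
  exact absurd (Finset.mem_Ioi.mp hb) (this ▸ lt_irrefl a)

lemma Pdet_degree (hh : 0 < h) (r : Fin (n + 1)) :
    (Pdet n h r).degree = ((n - (r : ℕ) : ℕ) : WithBot ℕ) := by
  rw [Pdet_eq, degree_mul, degree_mul, degree_mul, c0_degree n h hh,
    esymm_degree n h _ (Nat.sub_le n r),
    degree_pow, degree_pow]
  simp [degree_neg]

theorem main (hh : 0 < h) (r : Fin (n + 1)) :
    ∃ p : Polynomial ℂ, p.degree = ((n - (r : ℕ) : ℕ) : WithBot ℕ) ∧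
      ∀ x : ℝ, _root_.detM n h r x = p.eval (x : ℂ) := by
  refine ⟨Pdet n h r, Pdet_degree n h hh r, fun x => ?_⟩
  rw [Pdet]
  rw [show (Polynomial.eval (x : ℂ)) = (Polynomial.evalRingHom (x : ℂ) : ℂ[X] → ℂ) from rfl,
    RingHom.map_det]
  rw [_root_.detM]
  congr 1
  ext a b
  simp [zp, RingHom.mapMatrix_apply, Matrix.map_apply, map_pow]

end Aux4

theorem stmt_4 (n : ℕ) (h : ℝ) (hh : 0 < h) (r : Fin (n + 1)) :
    ∃ p : Polynomial ℂ, p.degree = ((n - (r : ℕ) : ℕ) : WithBot ℕ) ∧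
      ∀ x : ℝ, detM n h r x = p.eval (x : ℂ) :=
  Aux4.main n h hh r
end

section
/- Let N ≥ 1 and let W_1, ..., W_N : ℝ → ℂ be polynomials with strictly decreasing degrees deg W_1 > deg W_2 > ... > deg W_N, all nonzero. Let ℓ_1 < ℓ_2 < ... < ℓ_M be distinct integers and let h > 0. If p_1, ..., p_N are trigonometric polynomials of the form p_j(t) = ∑_{m=1}^M x_{j,m} e^{−2πi ℓ_m t / h} with complex coefficients, and ∑_{j=1}^N p_j(t) W_j(t) = 0 for all t in some nonempty open interval K ⊆ ℝ, then all p_j are identically zero. -/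
open Polynomial Complex Filter Topology

theorem stmt_5 (N : ℕ) (hN : 1 ≤ N) (W : Fin N → Polynomial ℂ)
    (hW : ∀ j, W j ≠ 0)
    (hdeg : ∀ j k : Fin N, j < k → (W k).degree < (W j).degree)
    (M : ℕ) (ℓ : Fin M → ℤ) (hℓ : StrictMono ℓ)
    (h : ℝ) (hh : 0 < h)
    (c : Fin N → Fin M → ℂ)
    (a b : ℝ) (hab : a < b)
    (hvanish : ∀ t ∈ Set.Ioo a b,
      ∑ j, (∑ m, c j m * Complex.exp (-2 * Real.pi * Complex.I * (ℓ m : ℂ) * (t : ℂ) / (h : ℂ)))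
          * (W j).eval (t : ℂ) = 0) :
    ∀ j, ∀ t : ℝ,
      ∑ m, c j m * Complex.exp (-2 * Real.pi * Complex.I * (ℓ m : ℂ) * (t : ℂ) / (h : ℂ)) = 0 := by
  have hh' : (h : ℂ) ≠ 0 := by exact_mod_cast hh.ne'
  set F : ℂ → ℂ := fun z =>
    ∑ j, (∑ m, c j m * Complex.exp (-2 * Real.pi * Complex.I * (ℓ m : ℂ) * z / (h : ℂ)))
          * (W j).eval z with hF
  -- F is entire
  have hdiff : Differentiable ℂ F := by
    apply Differentiable.fun_sum
    intro j _
    apply Differentiable.mul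
    · apply Differentiable.fun_sum
      intro m _
      exact (Complex.differentiable_exp.comp
        (((differentiable_const _).mul differentiable_id).div_const _)).const_mul _
    · exact (W j).differentiable
  -- F vanishes everywhere by analytic continuation
  have hF0 : ∀ z : ℂ, F z = 0 := by
    have hA : AnalyticOnNhd ℂ F Set.univ := (hdiff.differentiableOn.analyticOnNhd isOpen_univ)
    have key : Set.EqOn F 0 Set.univ := by
      apply hA.eqOn_zero_of_preconnected_of_frequently_eq_zero isPreconnected_univ
        (Set.mem_univ (a : ℂ))
      have hu : Tendsto (fun n : ℕ => ((a + (b - a) / (n + 2) : ℝ) : ℂ)) atTop (𝓝[≠] (a : ℂ)) := by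
        rw [tendsto_nhdsWithin_iff]
        constructor
        · have h1 : Tendsto (fun n : ℕ => ((n : ℝ) + 2)) atTop atTop :=
            (tendsto_natCast_atTop_atTop (R := ℝ)).atTop_add tendsto_const_nhds
          have h2 : Tendsto (fun n : ℕ => (b - a) / ((n : ℝ) + 2)) atTop (𝓝 0) :=
            Tendsto.div_atTop tendsto_const_nhds h1
          have h3 : Tendsto (fun n : ℕ => (a + (b - a) / (n + 2) : ℝ)) atTop (𝓝 a) := by
            simpa using (tendsto_const_nhds (x := a)).add h2
          exact (Complex.continuous_ofReal.continuousAt.tendsto.comp h3)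
        · filter_upwards with n
          simp only [Set.mem_compl_iff, Set.mem_singleton_iff]
          intro hcon
          have : (a + (b - a) / (n + 2) : ℝ) = a := by exact_mod_cast hcon
          have hpos : (0:ℝ) < (b - a) / (n + 2) :=
            div_pos (by linarith) (by positivity)
          linarith
      refine hu.frequently (Frequently.of_forall fun n => ?_)
      apply hvanish
      constructor
      · have : (0:ℝ) < (b - a) / (n + 2) :=
          div_pos (by linarith) (by positivity)
        linarith
      · have h2 : (b - a) / (n + 2) < b - a := by
          apply div_lt_self (by linarith)
          have : (0:ℝ) ≤ (n:ℝ) := n.cast_nonneg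
          linarith
        linarith
    intro z; exact key (Set.mem_univ z)
  -- now fix j₀ and t
  intro j₀ t
  set A : Fin N → ℂ := fun j =>
    ∑ m, c j m * Complex.exp (-2 * Real.pi * Complex.I * (ℓ m : ℂ) * (t : ℂ) / (h : ℂ)) with hA
  show A j₀ = 0
  -- periodicity
  have hper : ∀ (n : ℕ) (j : Fin N),
      (∑ m, c j m * Complex.exp (-2 * Real.pi * Complex.I * (ℓ m : ℂ) * ((t : ℂ) + h * n) / (h : ℂ)))
        = A j := by
    intro n j
    apply Finset.sum_congr rfl
    intro m _
    congr 1
    have harg : -2 * Real.pi * Complex.I * (ℓ m : ℂ) * ((t : ℂ) + h * n) / (h : ℂ)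
        = -2 * Real.pi * Complex.I * (ℓ m : ℂ) * (t : ℂ) / (h : ℂ)
          + ((-(ℓ m * n) : ℤ) : ℂ) * (2 * Real.pi * Complex.I) := by
      field_simp
      push_cast
      ring
    rw [harg, Complex.exp_add, Complex.exp_int_mul_two_pi_mul_I, mul_one]
  -- the polynomial
  set V : Fin N → Polynomial ℂ := fun j =>
    (W j).comp (Polynomial.C (t : ℂ) + Polynomial.C (h : ℂ) * Polynomial.X) with hV
  have hq1 : (Polynomial.C (t : ℂ) + Polynomial.C (h : ℂ) * Polynomial.X).natDegree = 1 := by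
    rw [Polynomial.natDegree_C_add, Polynomial.natDegree_C_mul_X _ hh']
  have hlc : (Polynomial.C (t : ℂ) + Polynomial.C (h : ℂ) * Polynomial.X).leadingCoeff = (h : ℂ) := by
    rw [Polynomial.leadingCoeff, hq1]
    simp
  have hVlead : ∀ j, (V j).leadingCoeff = (W j).leadingCoeff * (h : ℂ) ^ (W j).natDegree := by
    intro j
    rw [hV]
    rw [Polynomial.leadingCoeff_comp (by rw [hq1]; norm_num)]
    rw [hlc]
  have hVne : ∀ j, (V j).leadingCoeff ≠ 0 := by
    intro j
    rw [hVlead j]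
    exact mul_ne_zero (Polynomial.leadingCoeff_ne_zero.2 (hW j)) (pow_ne_zero _ hh')
  have hVdeg : ∀ j, (V j).natDegree = (W j).natDegree := by
    intro j
    rw [hV, Polynomial.natDegree_comp, hq1, mul_one]
  set Q : Polynomial ℂ := ∑ j, Polynomial.C (A j) * V j with hQ
  have hQeval : ∀ n : ℕ, Q.eval (n : ℂ) = 0 := by
    intro n
    have := hF0 ((t : ℂ) + h * n)
    rw [hF] at this
    simp only [Q, Polynomial.eval_finset_sum, Polynomial.eval_mul, Polynomial.eval_C, hV,
      Polynomial.eval_comp, Polynomial.eval_add, Polynomial.eval_mul, Polynomial.eval_C,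
      Polynomial.eval_X]
    calc ∑ j, A j * (W j).eval ((t:ℂ) + h * n)
        = ∑ j, (∑ m, c j m * Complex.exp (-2 * Real.pi * Complex.I * (ℓ m : ℂ) * ((t : ℂ) + h * n) / (h : ℂ))) * (W j).eval ((t:ℂ) + h * n) := by
          refine Finset.sum_congr rfl fun j _ => ?_
          rw [hper n j]
      _ = 0 := this
  have hQ0 : Q = 0 := by
    apply Polynomial.eq_zero_of_infinite_isRoot
    apply Set.infinite_of_injective_forall_mem (f := fun n : ℕ => (n : ℂ))
      Nat.cast_injective
    intro n
    exact hQeval n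
  -- conclude all A j = 0
  by_contra hcon
  have hS : (Finset.univ.filter (fun j => A j ≠ 0)).Nonempty :=
    ⟨j₀, by simp [hcon]⟩
  set j := (Finset.univ.filter (fun j => A j ≠ 0)).min' hS with hj
  have hjmem : A j ≠ 0 := by
    have := Finset.min'_mem _ hS
    simpa using this
  have hjmin : ∀ k, A k ≠ 0 → j ≤ k := fun k hk =>
    Finset.min'_le _ _ (by simpa using hk)
  have hcoeff : Q.coeff ((V j).natDegree) = A j * (V j).leadingCoeff := by
    rw [hQ, Polynomial.finset_sum_coeff]
    rw [Finset.sum_eq_single j]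
    · rw [Polynomial.coeff_C_mul]; rfl
    · intro k _ hkj
      rcases eq_or_ne (A k) 0 with hk0 | hk0
      · simp [hk0]
      · have hjk : j < k := lt_of_le_of_ne (hjmin k hk0) (Ne.symm hkj)
        have hdlt : (V k).natDegree < (V j).natDegree := by
          rw [hVdeg, hVdeg]
          exact Polynomial.natDegree_lt_natDegree (hW k) (hdeg j k hjk)
        rw [Polynomial.coeff_C_mul, Polynomial.coeff_eq_zero_of_natDegree_lt hdlt, mul_zero]
    · intro hmem; exact absurd (Finset.mem_univ j) hmem
  rw [hQ0] at hcoeff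
  simp only [Polynomial.coeff_zero] at hcoeff
  exact hjmem (by
    rcases mul_eq_zero.1 hcoeff.symm with h1 | h1
    · exact h1
    · exact absurd h1 (hVne j))
end

section
/- Let n ≥ 1 and h > 0. Consider the n × (n+1) matrix M(x) with entries M(x)_{j,r} = (i(x + jh))^r, j = 1..n, r = 0..n. Let W(x) ∈ ℂ^{n+1} be the generalized cross product of the rows of M(x), so that W_k(x) is (up to sign) the minor of M(x) obtained by deleting column k−1. Then the components W_1, ..., W_{n+1} are linearly independent over the ring of trigonometric polynomials: if p_1, ..., p_{n+1} are finite complex linear combinations of functions e^{−2πi ℓ t / h} (ℓ ∈ ℤ) with ∑_k p_k(t) W_k(t) = 0 for all t ∈ ℝ, then all p_k = 0. -/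
/-- The generalized cross product of the rows of the `n × (n+1)` matrix `M(x)`
with `(j,r)` entry `(i(x+jh))^r`: its `k`-th component is, up to sign, the minor
of `M(x)` obtained by deleting column `k`. -/
noncomputable def Wcross (n : ℕ) (h : ℝ) (k : Fin (n + 1)) (x : ℝ) : ℂ :=
  (-1 : ℂ) ^ ((k : ℕ) + 1) *
    (Matrix.of fun i j : Fin n =>
      (Complex.I * ((x : ℂ) + ((i : ℕ) + 1) * (h : ℂ))) ^ ((k.succAbove j : Fin (n + 1)) : ℕ)).det

open Polynomial Matrix

noncomputable def zc (h : ℝ) (z : ℂ) (j : ℕ) : ℂ := Complex.I * (z + ((j : ℂ) + 1) * (h : ℂ))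

noncomputable def Amat (n : ℕ) (h : ℝ) (a : Fin (n+1) → ℂ) (z : ℂ) :
    Matrix (Fin (n+1)) (Fin (n+1)) ℂ :=
  Matrix.of (Fin.cons a (fun i r => zc h z (i : ℕ) ^ (r : ℕ)))

noncomputable def AmatP (n : ℕ) (h : ℝ) (a : Fin (n+1) → ℂ) :
    Matrix (Fin (n+1)) (Fin (n+1)) (Polynomial ℂ) :=
  Matrix.of (Fin.cons (fun r => C (a r))
    (fun i r => (C Complex.I * (X + C ((((i : ℕ) : ℂ) + 1) * (h : ℂ)))) ^ (r : ℕ)))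

lemma AmatP_map (n : ℕ) (h : ℝ) (a : Fin (n+1) → ℂ) (z : ℂ) :
    (AmatP n h a).map (evalRingHom z) = Amat n h a z := by
  ext i r
  refine Fin.cases ?_ (fun i => ?_) i
  · simp [AmatP, Amat]
  · simp [AmatP, Amat, zc]

lemma det_Amat (n : ℕ) (h : ℝ) (a : Fin (n+1) → ℂ) (x : ℝ) :
    (Amat n h a (x : ℂ)).det = -∑ k : Fin (n+1), a k * Wcross n h k x := by
  rw [Matrix.det_succ_row_zero, ← Finset.sum_neg_distrib]
  refine Finset.sum_congr rfl fun k _ => ?_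
  have hsub : (Amat n h a (x:ℂ)).submatrix Fin.succ k.succAbove
      = Matrix.of fun i j : Fin n =>
        (Complex.I * ((x : ℂ) + ((i : ℕ) + 1) * (h : ℂ))) ^ ((k.succAbove j : Fin (n+1)) : ℕ) := by
    ext i j
    simp [Amat, zc]
  have h0 : (Amat n h a (x:ℂ)) 0 k = a k := rfl
  rw [hsub, h0, Wcross, pow_succ]
  ring

noncomputable def PPaux (d : ℕ → ℂ) (m : ℕ) : Polynomial (Polynomial ℂ) :=
  ∏ j ∈ Finset.range m, (X - C (X + C (d j)))

lemma PPaux_natDegree (d : ℕ → ℂ) (m : ℕ) : (PPaux d m).natDegree = m := by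
  rw [PPaux, Polynomial.natDegree_prod_of_monic _ _ fun j _ => monic_X_sub_C _]
  simp only [natDegree_X_sub_C, Finset.sum_const, smul_eq_mul, mul_one, Finset.card_range]

lemma PPaux_coeff_zero (d : ℕ → ℂ) (m r : ℕ) (hrm : m < r) : (PPaux d m).coeff r = 0 :=
  Polynomial.coeff_eq_zero_of_natDegree_lt (by rw [PPaux_natDegree]; exact hrm)

lemma PPaux_coeff (d : ℕ → ℂ) (m : ℕ) :
    ∀ r : ℕ, r ≤ m →
      ((PPaux d m).coeff r).natDegree ≤ m - r ∧
        ((PPaux d m).coeff r).coeff (m - r) = (-1 : ℂ) ^ (m - r) * (m.choose r) := by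
  induction m with
  | zero =>
    intro r hr
    interval_cases r
    simp [PPaux]
  | succ m ih =>
    intro r hr
    have hstep : (PPaux d (m+1)).coeff r
        = (PPaux d m * X).coeff r - (PPaux d m).coeff r * (X + C (d m)) := by
      rw [PPaux, Finset.prod_range_succ, ← PPaux, mul_sub, Polynomial.coeff_sub,
        Polynomial.coeff_mul_C]
    rcases Nat.eq_or_lt_of_le hr with hr1 | hr2
    · -- r = m + 1
      have hme : (PPaux d m).coeff m = 1 := by
        have := (monic_prod_of_monic (Finset.range m)
          (fun j => (X - C (X + C (d j)) : Polynomial (Polynomial ℂ)))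
          (fun j _ => monic_X_sub_C _))
        have h2 := this.coeff_natDegree
        rwa [← PPaux, PPaux_natDegree] at h2
      subst hr1
      rw [hstep, Polynomial.coeff_mul_X, hme, PPaux_coeff_zero d m (m+1) (by omega),
        zero_mul, sub_zero]
      simp
    · -- r ≤ m
      have hrm : r ≤ m := by omega
      match r with
      | 0 =>
        obtain ⟨hdeg, hc⟩ := ih 0 (by omega)
        simp only [Nat.sub_zero] at hdeg hc ⊢
        rw [hstep, Polynomial.mul_coeff_zero, Polynomial.coeff_X_zero, mul_zero, zero_sub]
        constructor
        · refine (natDegree_neg _).le.trans ?_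
          refine (natDegree_mul_le).trans ?_
          rw [natDegree_X_add_C]
          omega
        · rw [Polynomial.coeff_neg, mul_add, Polynomial.coeff_add, Polynomial.coeff_mul_X,
            Polynomial.coeff_mul_C]
          rw [hc, Polynomial.coeff_eq_zero_of_natDegree_lt (lt_of_le_of_lt hdeg (by omega)),
            zero_mul, add_zero]
          simp [pow_succ]
      | (r' + 1) =>
        obtain ⟨hdeg1, hc1⟩ := ih r' (by omega)
        obtain ⟨hdeg2, hc2⟩ := ih (r' + 1) hrm
        rw [hstep, Polynomial.coeff_mul_X]
        constructor
        · refine (natDegree_sub_le _ _).trans ?_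
          refine max_le (hdeg1.trans (by omega)) ?_
          refine (natDegree_mul_le).trans ?_
          rw [natDegree_X_add_C]
          omega
        · have hN : m + 1 - (r' + 1) = (m - (r' + 1)) + 1 := by omega
          have hN2 : m + 1 - (r' + 1) = m - r' := by omega
          rw [mul_add, Polynomial.coeff_sub, Polynomial.coeff_add, hN,
            Polynomial.coeff_mul_X, Polynomial.coeff_mul_C, hc2, ← hN, hN2, hc1,
            Polynomial.coeff_eq_zero_of_natDegree_lt (lt_of_le_of_lt hdeg2 (by omega)),
            zero_mul, add_zero]
          have hch : ((m+1).choose (r'+1) : ℂ) = (m.choose r' : ℂ) + (m.choose (r'+1) : ℂ) := by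
            rw [Nat.choose_succ_succ]; push_cast; ring
          rw [hch]
          have h1 : m - r' = (m - (r'+1)) + 1 := by omega
          rw [h1, pow_succ]
          ring

theorem stmt_16 (n : ℕ) (hn : 1 ≤ n) (h : ℝ) (hh : 0 < h)
    (S : Finset ℤ) (c : Fin (n + 1) → ℤ → ℂ)
    (hvanish : ∀ t : ℝ,
      ∑ k : Fin (n + 1),
        (∑ ℓ ∈ S, c k ℓ * Complex.exp (-2 * Real.pi * Complex.I * (ℓ : ℂ) * (t : ℂ) / (h : ℂ)))
          * Wcross n h k t = 0) :
    ∀ k : Fin (n + 1), ∀ t : ℝ,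
      ∑ ℓ ∈ S, c k ℓ * Complex.exp (-2 * Real.pi * Complex.I * (ℓ : ℂ) * (t : ℂ) / (h : ℂ)) = 0 := by
  intro k0 t
  have hh0 : (h : ℂ) ≠ 0 := by
    exact_mod_cast (ne_of_gt hh)
  set a : Fin (n+1) → ℂ := fun k =>
    ∑ ℓ ∈ S, c k ℓ * Complex.exp (-2 * Real.pi * Complex.I * (ℓ : ℂ) * (t : ℂ) / (h : ℂ)) with ha
  show a k0 = 0
  -- Step 1: periodicity
  have hper : ∀ N : ℕ, ∀ k : Fin (n+1),
      (∑ ℓ ∈ S, c k ℓ * Complex.exp (-2 * Real.pi * Complex.I * (ℓ : ℂ)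
        * (((t + N * h : ℝ)) : ℂ) / (h : ℂ))) = a k := by
    intro N k
    rw [ha]
    refine Finset.sum_congr rfl fun ℓ _ => ?_
    congr 1
    have harg : -2 * Real.pi * Complex.I * (ℓ : ℂ) * (((t + N * h : ℝ)) : ℂ) / (h : ℂ)
        = -2 * Real.pi * Complex.I * (ℓ : ℂ) * (t : ℂ) / (h : ℂ)
          + ((-(ℓ * N) : ℤ) : ℂ) * (2 * Real.pi * Complex.I) := by
      push_cast
      field_simp
      ring
    rw [harg, Complex.exp_add, Complex.exp_int_mul_two_pi_mul_I, mul_one]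
  -- Step 2: determinant vanishes at shifted points
  have hdetN : ∀ N : ℕ, (Amat n h a ((t : ℂ) + N * h)).det = 0 := by
    intro N
    have hcast : ((t : ℂ) + N * h) = (((t + N * h : ℝ)) : ℂ) := by push_cast; ring
    rw [hcast, det_Amat, neg_eq_zero, ← hvanish (t + N * h)]
    refine Finset.sum_congr rfl fun k _ => ?_
    rw [hper N k]
  -- Step 3: determinant vanishes everywhere
  have hdetall : ∀ z : ℂ, (Amat n h a z).det = 0 := by
    have hpz : (AmatP n h a).det = 0 := by
      apply Polynomial.eq_zero_of_infinite_isRoot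
      apply Set.infinite_of_injective_forall_mem
        (f := fun N : ℕ => (t : ℂ) + N * h)
      case hi =>
        intro N M hNM
        have h2 : (N : ℂ) * h = (M : ℂ) * h := add_left_cancel hNM
        exact_mod_cast mul_right_cancel₀ hh0 h2
      case hf =>
        intro N
        show ((AmatP n h a).det).IsRoot _
        rw [Polynomial.IsRoot, ← coe_evalRingHom, RingHom.map_det, RingHom.mapMatrix_apply, AmatP_map]
        exact hdetN N
    intro z
    have := congrArg (evalRingHom z) hpz
    rwa [RingHom.map_det, RingHom.mapMatrix_apply, AmatP_map, map_zero] at this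
  -- Step 4: pairing with coefficients of the monic polynomial with roots zc h z j
  have hpair : ∀ z : ℂ,
      ∑ r : Fin (n+1), a r * (∏ j ∈ Finset.range n, (X - C (zc h z j))).coeff (r : ℕ) = 0 := by
    intro z
    set P : Polynomial ℂ := ∏ j ∈ Finset.range n, (X - C (zc h z j)) with hP
    have hPdeg : P.natDegree < n + 1 := by
      have : P.natDegree = n := by
        rw [hP, Polynomial.natDegree_prod _ _ (fun j _ => X_sub_C_ne_zero _)]
        simp
      omega
    have hPeval : ∀ i : Fin n, P.eval (zc h z (i : ℕ)) = 0 := by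
      intro i
      rw [hP, Polynomial.eval_prod]
      exact Finset.prod_eq_zero (Finset.mem_range.mpr i.isLt) (by simp)
    have hzcinj : Function.Injective (fun i : Fin n => zc h z (i : ℕ)) := by
      intro i j hij
      simp only [zc] at hij
      have h2 := mul_left_cancel₀ Complex.I_ne_zero hij
      have h3 := add_left_cancel h2
      have h4 := mul_right_cancel₀ hh0 h3
      have h5 : ((i : ℕ) : ℂ) = ((j : ℕ) : ℂ) := by linear_combination h4
      have : (i : ℕ) = (j : ℕ) := by exact_mod_cast h5
      exact Fin.ext this
    obtain ⟨v, hv0, hvA⟩ := Matrix.exists_vecMul_eq_zero_iff.mpr (hdetall z)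
    have hrow : ∀ r : Fin (n+1),
        v 0 * a r + ∑ i : Fin n, v i.succ * zc h z (i : ℕ) ^ (r : ℕ) = 0 := by
      intro r
      have := congrFun hvA r
      simpa [Matrix.vecMul, dotProduct, Fin.sum_univ_succ, Amat] using this
    have hv00 : v 0 ≠ 0 := by
      intro h0
      apply hv0
      have hvand : (Matrix.vandermonde (fun i : Fin n => zc h z (i : ℕ))).det ≠ 0 :=
        Matrix.det_vandermonde_ne_zero_iff.mpr hzcinj
      have hw : (fun i : Fin n => v i.succ) = 0 := by
        by_contra hwne
        refine hvand (Matrix.exists_vecMul_eq_zero_iff.mp ⟨_, hwne, ?_⟩)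
        funext r'
        have hr := hrow (r'.castSucc)
        rw [h0, zero_mul, zero_add] at hr
        simpa [Matrix.vecMul, dotProduct, Matrix.vandermonde] using hr
      funext i
      refine Fin.cases h0 (fun i => ?_) i
      exact congrFun hw i
    have h1 : ∀ i : Fin n,
        ∑ r : Fin (n+1), P.coeff (r : ℕ) * zc h z (i : ℕ) ^ (r : ℕ) = 0 := by
      intro i
      rw [Fin.sum_univ_eq_sum_range (fun r => P.coeff r * zc h z (i : ℕ) ^ r)]
      rw [← Polynomial.eval_eq_sum_range' hPdeg]
      exact hPeval i
    have h0 : ∑ r : Fin (n+1),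
        (v 0 * a r + ∑ i : Fin n, v i.succ * zc h z (i : ℕ) ^ (r : ℕ)) * P.coeff (r : ℕ) = 0 :=
      Finset.sum_eq_zero fun r _ => by rw [hrow r, zero_mul]
    have split : ∑ r : Fin (n+1),
        (v 0 * a r + ∑ i : Fin n, v i.succ * zc h z (i : ℕ) ^ (r : ℕ)) * P.coeff (r : ℕ)
        = v 0 * (∑ r : Fin (n+1), a r * P.coeff (r : ℕ))
          + ∑ i : Fin n, v i.succ *
              ∑ r : Fin (n+1), P.coeff (r : ℕ) * zc h z (i : ℕ) ^ (r : ℕ) := by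
      rw [Finset.mul_sum]
      simp only [add_mul, Finset.sum_mul, Finset.sum_add_distrib, Finset.mul_sum]
      congr 1
      · exact Finset.sum_congr rfl fun r _ => by ring
      · rw [Finset.sum_comm]
        exact Finset.sum_congr rfl fun r _ => Finset.sum_congr rfl fun i _ => by ring
    rw [split] at h0
    have h2 : ∑ i : Fin n, v i.succ *
        ∑ r : Fin (n+1), P.coeff (r : ℕ) * zc h z (i : ℕ) ^ (r : ℕ) = 0 :=
      Finset.sum_eq_zero fun i _ => by rw [h1 i, mul_zero]
    rw [h2, add_zero] at h0
    exact (mul_eq_zero.mp h0).resolve_left hv00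
  -- Step 5: the polynomial identity in the shift variable
  set d : ℕ → ℂ := fun j => Complex.I * (((j : ℂ) + 1) * (h : ℂ)) with hd
  have hmap : ∀ z : ℂ, (PPaux d n).map (evalRingHom (Complex.I * z))
      = ∏ j ∈ Finset.range n, (X - C (zc h z j)) := by
    intro z
    rw [PPaux, Polynomial.map_prod]
    refine Finset.prod_congr rfl fun j _ => ?_
    rw [Polynomial.map_sub, Polynomial.map_X, Polynomial.map_C]
    congr 1
    rw [coe_evalRingHom, eval_add, eval_X, eval_C, zc, hd]
    congr 1
    ring
  have hG : (∑ r : Fin (n+1), Polynomial.C (a r) * (PPaux d n).coeff (r : ℕ)) = 0 := by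
    apply Polynomial.funext
    intro w
    set z : ℂ := -(Complex.I * w) with hz
    have hw : Complex.I * z = w := by
      rw [hz]
      have : Complex.I * -(Complex.I * w) = -(Complex.I * Complex.I) * w := by ring
      rw [this, Complex.I_mul_I]
      ring
    have hco : ∀ r : ℕ,
        (∏ j ∈ Finset.range n, (X - C (zc h z j))).coeff r = ((PPaux d n).coeff r).eval w := by
      intro r
      rw [← hmap z, Polynomial.coeff_map, coe_evalRingHom, hw]
    rw [Polynomial.eval_finset_sum, eval_zero]
    rw [← hpair z]
    refine Finset.sum_congr rfl fun r _ => ?_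
    rw [eval_mul, eval_C, hco (r : ℕ)]
  -- Step 6: extraction of coefficients
  have hfin : ∀ r : ℕ, ∀ hr : r < n + 1, a ⟨r, hr⟩ = 0 := by
    intro r
    induction r using Nat.strong_induction_on with
    | _ r ih =>
      intro hr
      have hr' : r ≤ n := Nat.lt_succ_iff.mp hr
      have h1 := congrArg (fun p : Polynomial ℂ => p.coeff (n - r)) hG
      simp only [Polynomial.finset_sum_coeff, Polynomial.coeff_C_mul,
        Polynomial.coeff_zero, Fin.val_mk] at h1
      rw [Finset.sum_eq_single (⟨r, hr⟩ : Fin (n+1))] at h1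
      · simp only [Fin.val_mk] at h1
        rw [(PPaux_coeff d n r hr').2] at h1
        have hcne : ((n.choose r : ℂ)) ≠ 0 := by
          exact_mod_cast (Nat.choose_pos hr').ne'
        have hne : ((-1 : ℂ) ^ (n - r) * (n.choose r : ℂ)) ≠ 0 :=
          mul_ne_zero (pow_ne_zero _ (by norm_num)) hcne
        exact (mul_eq_zero.mp h1).resolve_right hne
      · intro s _ hs
        have hsr : (s : ℕ) ≠ r := fun hc => hs (Fin.ext hc)
        rcases lt_or_gt_of_ne hsr with hlt | hgt
        · have : a s = 0 := by
            have := ih (s : ℕ) hlt s.isLt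
            simpa using this
          rw [this, zero_mul]
        · have hdeg := (PPaux_coeff d n (s : ℕ) (Nat.lt_succ_iff.mp s.isLt)).1
          rw [Polynomial.coeff_eq_zero_of_natDegree_lt
            (lt_of_le_of_lt hdeg (by omega)), mul_zero]
      · intro hmem
        exact absurd (Finset.mem_univ _) hmem
  have := hfin (k0 : ℕ) k0.isLt
  simpa using this
end
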